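/- Let E be an elliptic curve over ℚ given by y² = x³ + ax² + bx with a, b ∈ ℤ and b(a²−4b) ≠ 0, and let d be a squarefree integer. If the quartic curve d·y² = (a²−4b)x⁴ − 2adx² + d² has a ℚ_q-point for every prime q and an ℝ-point, then every prime divisor of d divides 2a(a²−4b). -/

import Mathlib

private lemma val_neg' {p : ℕ} [Fact p.Prime] (x : ℚ_[p]) :
    (-x).valuation = x.valuation := by
  by_cases hx : x = 0
  · simp [hx]
  have h : (-x) = ((-1 : ℤ) : ℚ_[p]) * x := by push_cast; ring
  rw [h, Padic.valuation_mul (by norm_num) hx, Padic.valuation_intCast]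
  have : padicValInt p (-1) = 0 := by simp [padicValInt]
  rw [this]; simp

private lemma val_pow' {p : ℕ} [Fact p.Prime] {x : ℚ_[p]} (hx : x ≠ 0) (n : ℕ) :
    (x ^ n).valuation = n * x.valuation := by
  induction n with
  | zero => simp [Padic.valuation_one]
  | succ n ih =>
      rw [pow_succ, Padic.valuation_mul (pow_ne_zero n hx) hx, ih]
      push_cast; ring

private lemma val_add_dom {p : ℕ} [Fact p.Prime] {x y : ℚ_[p]} (hx : x ≠ 0)
    (h : y ≠ 0 → x.valuation < y.valuation) :
    x + y ≠ 0 ∧ (x + y).valuation = x.valuation := by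
  by_cases hy : y = 0
  · subst hy; simp [hx]
  have hlt := h hy
  have hne : x + y ≠ 0 := by
    intro h0
    have hyx : y = -x := eq_neg_of_add_eq_zero_right h0
    rw [hyx, val_neg'] at hlt
    exact lt_irrefl _ hlt
  refine ⟨hne, le_antisymm ?_ ?_⟩
  · by_contra hgt
    push_neg at hgt
    have hx' : (x + y) + (-y) = x := by ring
    have hmin : min ((x + y).valuation) ((-y).valuation) ≤ x.valuation := by
      have := Padic.le_valuation_add (x := x + y) (y := -y) (by rw [hx']; exact hx)
      rwa [hx'] at this
    rw [val_neg'] at hmin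
    exact absurd hmin (not_le.mpr (lt_min hgt hlt))
  · have := Padic.le_valuation_add hne
    rwa [min_eq_left hlt.le] at this

/-- Let `E : y² = x³ + ax² + bx` over `ℚ` with `b(a² − 4b) ≠ 0` and `d` squarefree. If
the quartic twist `d·y² = (a² − 4b)x⁴ − 2adx² + d²` has a `ℚ_q`-point for every prime `q`
and an `ℝ`-point, then every prime divisor of `d` divides `2a(a² − 4b)`. -/
theorem stmt19 (a b : ℤ) (hb : b * (a ^ 2 - 4 * b) ≠ 0) (d : ℤ) (hd : Squarefree d)
    (hloc : ∀ (q : ℕ) [Fact q.Prime], ∃ x y : ℚ_[q],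
      (d : ℚ_[q]) * y ^ 2 = ((a ^ 2 - 4 * b : ℤ) : ℚ_[q]) * x ^ 4
        - ((2 * a * d : ℤ) : ℚ_[q]) * x ^ 2 + ((d ^ 2 : ℤ) : ℚ_[q]))
    (hreal : ∃ x y : ℝ, (d : ℝ) * y ^ 2 = ((a ^ 2 - 4 * b : ℤ) : ℝ) * x ^ 4
        - ((2 * a * d : ℤ) : ℝ) * x ^ 2 + ((d ^ 2 : ℤ) : ℝ)) :
    ∀ q : ℕ, q.Prime → (q : ℤ) ∣ d → (q : ℤ) ∣ 2 * a * (a ^ 2 - 4 * b) := by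
  intro q hq hqd
  haveI : Fact q.Prime := ⟨hq⟩
  by_contra hnd
  have hc : ¬ (q : ℤ) ∣ (a ^ 2 - 4 * b) := fun h => hnd (Dvd.dvd.mul_left h (2 * a))
  have hd0 : d ≠ 0 := hd.ne_zero
  have hc0 : (a ^ 2 - 4 * b) ≠ 0 := by
    intro h; exact hb (by rw [h, mul_zero])
  obtain ⟨x, y, hxy⟩ := hloc q
  set C : ℚ_[q] := ((a ^ 2 - 4 * b : ℤ) : ℚ_[q]) with hC
  set T : ℚ_[q] := ((2 * a * d : ℤ) : ℚ_[q]) with hT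
  set D : ℚ_[q] := ((d : ℤ) : ℚ_[q]) with hD
  have hD2 : ((d ^ 2 : ℤ) : ℚ_[q]) = D ^ 2 := by rw [hD]; push_cast; ring
  rw [hD2] at hxy
  have hCne : C ≠ 0 := by rw [hC]; exact_mod_cast Int.cast_ne_zero.mpr hc0
  have hDne : D ≠ 0 := by rw [hD]; exact_mod_cast Int.cast_ne_zero.mpr hd0
  -- valuation of C is 0
  have hvC : C.valuation = 0 := by
    rw [hC, Padic.valuation_intCast, padicValInt.eq_zero_of_not_dvd hc, Nat.cast_zero]
  -- valuation of D is 1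
  have hvD : D.valuation = 1 := by
    rw [hD, Padic.valuation_intCast]
    have h1 : 1 ≤ padicValInt q d := by
      rcases (padicValInt_dvd_iff 1 d).mp (by simpa using hqd) with h | h
      · exact absurd h hd0
      · exact h
    have h2 : padicValInt q d < 2 := by
      by_contra h2
      push_neg at h2
      have hdvd : (q : ℤ) ^ 2 ∣ d := (padicValInt_dvd_iff 2 d).mpr (Or.inr h2)
      rw [sq] at hdvd
      have := hd _ hdvd
      exact (Int.prime_iff_natAbs_prime.mpr (by simpa using hq)).not_unit this
    have : padicValInt q d = 1 := by omega
    rw [this, Nat.cast_one]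
  -- valuation of T is at least 1 (when T ≠ 0)
  have hvT : T ≠ 0 → 1 ≤ T.valuation := by
    intro hTne
    have had0 : (2 * a * d : ℤ) ≠ 0 := by
      intro h; apply hTne; rw [hT, h]; simp
    rw [hT, Padic.valuation_intCast]
    have : (q : ℤ) ^ 1 ∣ 2 * a * d := by simpa using Dvd.dvd.mul_left hqd (2 * a)
    rcases (padicValInt_dvd_iff 1 (2 * a * d)).mp this with h | h
    · exact absurd h had0
    · exact_mod_cast h
  -- the point must have y ≠ 0 whenever RHS ≠ 0, and then the valuation identity
  have key : ∀ v : ℤ, (C * x ^ 4 - T * x ^ 2 + D ^ 2) ≠ 0 →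
      (C * x ^ 4 - T * x ^ 2 + D ^ 2).valuation = v → ∃ w : ℤ, v = 1 + 2 * w := by
    intro v hne hv
    have hLne : D * y ^ 2 ≠ 0 := by rw [hxy]; exact hne
    have hyne : y ≠ 0 := by
      intro h; apply hLne; rw [h]; ring
    have : (D * y ^ 2).valuation = 1 + 2 * y.valuation := by
      rw [Padic.valuation_mul hDne (pow_ne_zero 2 hyne), hvD, val_pow' hyne]
      push_cast; ring
    refine ⟨y.valuation, ?_⟩
    rw [← hv, ← hxy, this]
  by_cases hx : x = 0
  · -- equation reads D * y² = D², valuation 2 = 1 + 2w, contradiction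
    have h2 : (C * 0 ^ 4 - T * 0 ^ 2 + D ^ 2) = D ^ 2 := by ring
    obtain ⟨w, hw⟩ := key 2 (by rw [hx, h2]; exact pow_ne_zero 2 hDne)
      (by rw [hx, h2, val_pow' hDne, hvD]; ring)
    omega
  · set m : ℤ := x.valuation with hm
    have hvt1 : (C * x ^ 4).valuation = 4 * m := by
      rw [Padic.valuation_mul hCne (pow_ne_zero 4 hx), hvC, val_pow' hx, hm]
      push_cast; ring
    have ht1ne : C * x ^ 4 ≠ 0 := mul_ne_zero hCne (pow_ne_zero 4 hx)
    have hvt2 : T * x ^ 2 ≠ 0 → 1 + 2 * m ≤ (T * x ^ 2).valuation := by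
      intro h
      have hTne : T ≠ 0 := fun h0 => h (by rw [h0]; ring)
      rw [Padic.valuation_mul hTne (pow_ne_zero 2 hx), val_pow' hx, hm]
      have := hvT hTne
      push_cast
      omega
    by_cases hm0 : m ≤ 0
    · -- dominant term is C x⁴, valuation 4m, even
      have hS : C * x ^ 4 + (-(T * x ^ 2)) ≠ 0 ∧
          (C * x ^ 4 + (-(T * x ^ 2))).valuation = 4 * m := by
        have := val_add_dom (p := q) ht1ne (y := -(T * x ^ 2)) ?_
        · rwa [hvt1] at this
        · intro hne
          rw [val_neg', hvt1]
          have := hvt2 (fun h0 => hne (by rw [h0]; ring))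
          omega
      have hR := val_add_dom (p := q) hS.1 (y := D ^ 2) ?_
      · have heq : C * x ^ 4 + (-(T * x ^ 2)) + D ^ 2 = C * x ^ 4 - T * x ^ 2 + D ^ 2 := by
          ring
        rw [heq] at hR
        obtain ⟨w, hw⟩ := key (4 * m) hR.1 (by rw [hR.2, hS.2])
        omega
      · intro _
        rw [val_pow' hDne, hvD, hS.2]
        omega
    · -- m ≥ 1 : dominant term is D², valuation 2
      push_neg at hm0
      have hSval : C * x ^ 4 - T * x ^ 2 ≠ 0 → 3 ≤ (C * x ^ 4 - T * x ^ 2).valuation := by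
        intro hSne
        by_cases hT2 : T * x ^ 2 = 0
        · rw [hT2, sub_zero, hvt1]; omega
        · have heq : C * x ^ 4 - T * x ^ 2 = C * x ^ 4 + (-(T * x ^ 2)) := by ring
          rw [heq] at hSne ⊢
          have hmin := Padic.le_valuation_add hSne
          rw [val_neg', hvt1] at hmin
          have h2 := hvt2 hT2
          exact le_trans (le_min (by omega) (by omega)) hmin
      have hR := val_add_dom (p := q) (x := D ^ 2) (pow_ne_zero 2 hDne)
          (y := C * x ^ 4 - T * x ^ 2) ?_
      · have heq : D ^ 2 + (C * x ^ 4 - T * x ^ 2) = C * x ^ 4 - T * x ^ 2 + D ^ 2 := by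
          ring
        rw [heq] at hR
        obtain ⟨w, hw⟩ := key 2 hR.1 (by rw [hR.2, val_pow' hDne, hvD]; ring)
        omega
      · intro hne
        rw [val_pow' hDne, hvD]
        have := hSval hne
        omega
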